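/- arXiv:0704.0273 — 2 statements merged into one kernel-verified Lean document; each statement's English description precedes it below -/
import Mathlib

section
/- Let Γ ⊂ Σ be a graph embedded as the 1-skeleton of a CW decomposition of a closed oriented surface Σ. If Γ admits a Kasteleyn orientation (an orientation K of the edges such that for every face f, the number n^K(∂f) of edges traversed against their orientation when going around ∂f counter-clockwise is odd), then the number of vertices of Γ is even. -/
/-- Starting vertex of a step of a walk: the step `(e, b)` traverses the edge `e`
along its reference direction (`src e → dst e`) if `b = true`, against it otherwise. -/
def stepStart {V E : Type*} (src dst : E → V) (p : E × Bool) : V :=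
  if p.2 then src p.1 else dst p.1

/-- Ending vertex of a step of a walk. -/
def stepEnd {V E : Type*} (src dst : E → V) (p : E × Bool) : V :=
  if p.2 then dst p.1 else src p.1

/-- A nonempty cyclically closed walk: each step ends where the (cyclically) next
one starts. -/
def IsClosedWalk {V E : Type*} (src dst : E → V) (l : List (E × Bool)) : Prop :=
  l ≠ [] ∧ ∀ i : Fin l.length,
    stepEnd src dst (l.get i) =
      stepStart src dst (l.get ⟨(i.1 + 1) % l.length, Nat.mod_lt _ (Nat.lt_of_le_of_lt (Nat.zero_le _) i.2)⟩)

/-- Decompose the count of disagreeing steps as a sum over edges. -/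
lemma countP_eq_sum_count {E : Type*} [Fintype E] [DecidableEq E]
    (K : E → Bool) (l : List (E × Bool)) :
    l.countP (fun p => p.2 != K p.1) = ∑ e : E, l.count (e, !K e) := by
  induction l with
  | nil => simp
  | cons a l ih =>
    rw [List.countP_cons]
    simp only [List.count_cons, beq_iff_eq]
    rw [Finset.sum_add_distrib, ← ih]
    congr 1
    rcases a with ⟨e₀, b₀⟩
    rw [Finset.sum_eq_single e₀ (fun b _ hb => if_neg (by simp [Prod.ext_iff, Ne.symm hb]))
      (by simp)]
    by_cases h : b₀ = !K e₀
    · subst h; simp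
    · have hb : b₀ = K e₀ := by revert h; cases b₀ <;> cases K e₀ <;> simp
      rw [if_neg (by simp [Prod.ext_iff, hb]), if_neg (by simp [hb])]

/-- If a graph `Γ`, the 1-skeleton of a CW decomposition of a closed oriented surface
of genus `g` (each edge appearing exactly twice, once in each direction, among the
counter-clockwise face boundary walks `bd f`; Euler characteristic `V − E + F = 2 − 2g`)
admits a Kasteleyn orientation `K` (for every face `f`, the number `n^K(∂f)` of edges
of `∂f` traversed against `K` is odd), then the number of vertices is even. -/
theorem even_card_vertices_of_kasteleyn
    {V E F : Type*} [Fintype V] [Fintype E] [Fintype F] [DecidableEq E]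
    (src dst : E → V) (bd : F → List (E × Bool))
    (hclosed : ∀ f : F, IsClosedWalk src dst (bd f))
    (hpair : ∀ e : E, (∑ f : F, (bd f).count (e, true)) = 1 ∧
      (∑ f : F, (bd f).count (e, false)) = 1)
    (g : ℕ)
    (heuler : (Fintype.card V : ℤ) - Fintype.card E + Fintype.card F = 2 - 2 * g)
    (K : E → Bool)
    (hK : ∀ f : F, Odd ((bd f).countP (fun p => p.2 != K p.1))) :
    Even (Fintype.card V) := by
  -- total number of disagreeing steps equals the number of edges
  have hS : (∑ f : F, (bd f).countP (fun p => p.2 != K p.1)) = Fintype.card E := by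
    have : (∑ f : F, (bd f).countP (fun p => p.2 != K p.1)) =
        ∑ e : E, ∑ f : F, (bd f).count (e, !K e) := by
      rw [Finset.sum_comm]
      exact Finset.sum_congr rfl fun f _ => countP_eq_sum_count K (bd f)
    rw [this]
    have hone : ∀ e : E, (∑ f : F, (bd f).count (e, !K e)) = 1 := by
      intro e
      cases h : K e
      · simpa using (hpair e).1
      · simpa using (hpair e).2
    rw [Finset.sum_congr rfl (fun e _ => hone e), Finset.sum_const, smul_eq_mul,
      mul_one, Finset.card_univ]
  -- mod 2, E = F
  have hEF : ((Fintype.card E : ZMod 2)) = (Fintype.card F : ZMod 2) := by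
    have := congrArg (fun n : ℕ => (n : ZMod 2)) hS
    simp only [Nat.cast_sum] at this
    rw [← this]
    have hodd : ∀ f : F, ((((bd f).countP (fun p => p.2 != K p.1)) : ZMod 2)) = 1 := by
      intro f
      obtain ⟨k, hk⟩ := hK f
      rw [hk]
      push_cast
      rw [show ((2 : ZMod 2)) = 0 from rfl]
      ring
    rw [Finset.sum_congr rfl (fun f _ => hodd f), Finset.sum_const, Finset.card_univ,
      nsmul_eq_mul, mul_one]
  -- cast Euler relation to ZMod 2
  have h2 : ((Fintype.card V : ZMod 2)) = 0 := by
    have := congrArg (fun n : ℤ => (n : ZMod 2)) heuler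
    push_cast at this
    rw [hEF] at this
    have h20 : ((2 : ZMod 2)) = 0 := rfl
    rw [h20] at this
    ring_nf at this ⊢
    linear_combination this
  have hdvd : 2 ∣ Fintype.card V := (ZMod.natCast_eq_zero_iff _ 2).mp h2
  exact even_iff_two_dvd.mpr hdvd
end

section
/- Let Γ ⊂ Σ be a connected surface graph with boundary, with V vertices, on a compact oriented surface Σ whose boundary components are C₁,…,C_μ (oriented as induced boundary). Given n₁,…,n_μ ∈ {0,1}, there exists a Kasteleyn orientation K on Γ ⊂ Σ with 1 + n^K(−C_i) ≡ n_i (mod 2) for all i if and only if n₁ + ⋯ + n_μ ≡ V (mod 2). -/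
/-- The reversed walk `−C`. -/
def revWalk {E : Type*} (l : List (E × Bool)) : List (E × Bool) :=
  (l.map (fun p => (p.1, !p.2))).reverse

/-- `n^K(C)`: the number of steps of the walk `C` traversing an edge against the
orientation `K` (where `K e = true` means `K` orients `e` from `src e` to `dst e`). -/
def againstCount {E : Type*} (K : E → Bool) (l : List (E × Bool)) : ℕ :=
  l.countP (fun p => p.2 != K p.1)

lemma mem_revWalk {E : Type*} {l : List (E × Bool)} {e : E} {c : Bool} :
    (e, c) ∈ revWalk l ↔ (e, !c) ∈ l := by
  simp only [revWalk, List.mem_reverse, List.mem_map]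
  constructor
  · rintro ⟨⟨a, b⟩, hm, he⟩
    rw [Prod.mk.injEq] at he
    obtain ⟨rfl, hb⟩ := he
    have hb' : b = !c := by rw [← hb, Bool.not_not]
    rwa [← hb']
  · intro h
    exact ⟨(e, !c), h, by simp⟩

lemma againstCount_update {E : Type*} [DecidableEq E] (K : E → Bool) (e : E)
    (l : List (E × Bool)) :
    (againstCount (Function.update K e (!K e)) l : ZMod 2)
      = againstCount K l + l.count (e, true) + l.count (e, false) := by
  induction l with
  | nil => simp [againstCount]
  | cons p l ih =>
    obtain ⟨a, b⟩ := p
    simp only [againstCount, List.countP_cons, List.count_cons] at *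
    push_cast at *
    by_cases h : a = e
    · subst h
      rcases Bool.eq_false_or_eq_true (K a) with hK | hK <;>
        rcases Bool.eq_false_or_eq_true b with hb | hb <;>
          · rw [ih]
            simp only [hK, hb, Function.update_self, Prod.mk.injEq, beq_iff_eq,
              Prod.ext_iff, bne_iff_ne, ne_eq]
            norm_num
            try ring_nf
            try simp [ZMod.natCast_self]
            try abel
    · simp only [Function.update_of_ne h, Prod.ext_iff, h, beq_iff_eq, and_false,
        false_and, if_false, if_neg (fun hh : a = e ∧ b = true => h hh.1),
        if_neg (fun hh : a = e ∧ b = false => h hh.1)]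
      rw [ih]
      ring

lemma againstCount_eq_sum {E : Type*} [Fintype E] [DecidableEq E] (K : E → Bool)
    (l : List (E × Bool)) :
    againstCount K l = ∑ e : E, l.count (e, !K e) := by
  induction l with
  | nil => simp [againstCount]
  | cons p l ih =>
    obtain ⟨a, b⟩ := p
    simp only [againstCount, List.countP_cons, List.count_cons] at *
    rw [ih, Finset.sum_add_distrib]
    congr 1
    by_cases h : b = !K a
    · subst h
      rw [Finset.sum_eq_single a]
      · simp
      · intro c _ hca
        simp only [Prod.ext_iff, beq_iff_eq]
        rw [if_neg]
        rintro ⟨h1, -⟩; exact hca h1.symm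
      · simp
    · rw [Finset.sum_eq_zero, if_neg (by simpa using h)]
      intro c _
      simp only [Prod.ext_iff, beq_iff_eq]
      rw [if_neg]
      rintro ⟨h1, h2⟩
      exact h (h1 ▸ h2)

lemma sum_againstCount {E X : Type*} [Fintype E] [DecidableEq E] [Fintype X]
    (w : X → List (E × Bool))
    (hcount : ∀ (e : E) (b : Bool), ∑ x : X, (w x).count (e, b) = 1)
    (K : E → Bool) : ∑ x : X, againstCount K (w x) = Fintype.card E := by
  calc ∑ x : X, againstCount K (w x) = ∑ x : X, ∑ e : E, (w x).count (e, !K e) := by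
        simp_rw [againstCount_eq_sum]
    _ = ∑ e : E, ∑ x : X, (w x).count (e, !K e) := Finset.sum_comm
    _ = ∑ _e : E, 1 := Finset.sum_congr rfl fun e _ => hcount e (!K e)
    _ = Fintype.card E := by simp

lemma exists_orientation {E X : Type*} [Fintype E] [DecidableEq E] [Fintype X]
    (w : X → List (E × Bool))
    (hcount : ∀ (e : E) (b : Bool), ∑ x : X, (w x).count (e, b) = 1)
    (G : SimpleGraph X)
    (hadj : ∀ x y, G.Adj x y → ∃ e b b', (e, b) ∈ w x ∧ (e, b') ∈ w y)
    (hGconn : G.Connected)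
    (t : X → ZMod 2)
    (hsum : (∑ x : X, t x) = (Fintype.card E : ZMod 2)) :
    ∃ K : E → Bool, ∀ x, (againstCount K (w x) : ZMod 2) = t x := by
  classical
  have h2 : ∀ a : ZMod 2, a + a = 0 := by decide
  have h20 : (1 + 1 : ZMod 2) = 0 := by decide
  have hφsum : ∀ K : E → Bool,
      ∑ x : X, (againstCount K (w x) : ZMod 2) = (Fintype.card E : ZMod 2) := by
    intro K
    rw [← Nat.cast_sum, sum_againstCount w hcount K]
  -- toggling the two endpoints of an edge of G
  have htoggle : ∀ x y, G.Adj x y → ∀ K : E → Bool, ∃ K', ∀ z,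
      (againstCount K' (w z) : ZMod 2) = againstCount K (w z)
        + (if z = x then 1 else 0) + (if z = y then 1 else 0) := by
    intro x y hxy K
    obtain ⟨e, b, b', hbx, hby⟩ := hadj x y hxy
    have hne : x ≠ y := hxy.ne
    have huniq : ∀ (c : Bool) (z : X), (e, c) ∈ w z →
        ((w z).count (e, c) = 1 ∧ ∀ z', z' ≠ z → (w z').count (e, c) = 0) := by
      intro c z hz
      have hone := hcount e c
      have hmem : 1 ≤ (w z).count (e, c) := List.count_pos_iff.mpr hz
      have hsplit : (w z).count (e, c)
          + ∑ z' ∈ Finset.univ.erase z, (w z').count (e, c) = 1 := by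
        rw [← hone]
        exact Finset.add_sum_erase Finset.univ
          (fun z' => (w z').count (e, c)) (Finset.mem_univ z)
      have hz0 : ∑ z' ∈ Finset.univ.erase z, (w z').count (e, c) = 0 := by omega
      refine ⟨by omega, fun z' hz' => ?_⟩
      exact Finset.sum_eq_zero_iff.mp hz0 z' (by simp [hz'])
    have hx1 := huniq b x hbx
    have hbne : b' = !b := by
      by_contra hbb
      have hbb' : b' = b := by cases b <;> cases b' <;> simp_all
      subst hbb'
      have := hx1.2 y (Ne.symm hne)
      have hmem : 1 ≤ (w y).count (e, b') := List.count_pos_iff.mpr hby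
      omega
    subst hbne
    have hy1 := huniq (!b) y hby
    have hcounts : ∀ z, (((w z).count (e, true) : ZMod 2) + (w z).count (e, false))
        = (if z = x then 1 else 0) + (if z = y then 1 else 0) := by
      intro z
      have e1 : (w z).count (e, b) = if z = x then 1 else 0 := by
        split_ifs with h
        · subst h; exact hx1.1
        · exact hx1.2 z h
      have e2 : (w z).count (e, !b) = if z = y then 1 else 0 := by
        split_ifs with h
        · subst h; exact hy1.1
        · exact hy1.2 z h
      cases b
      · simp only [Bool.not_false] at e1 e2
        rw [e1, e2]
        push_cast
        split_ifs <;> ring1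
      · simp only [Bool.not_true] at e1 e2
        rw [e1, e2]
        push_cast
        split_ifs <;> ring1
    refine ⟨Function.update K e (!K e), fun z => ?_⟩
    rw [againstCount_update, add_assoc, hcounts z, ← add_assoc]
  -- toggling along a path
  have hreach : ∀ x y, G.Reachable x y → ∀ K : E → Bool, ∃ K', ∀ z,
      (againstCount K' (w z) : ZMod 2) = againstCount K (w z)
        + (if z = x then 1 else 0) + (if z = y then 1 else 0) := by
    intro x y hxy
    obtain ⟨p⟩ := hxy
    induction p with
    | nil =>
      intro K
      refine ⟨K, fun z => ?_⟩
      split_ifs with h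
      · rw [add_assoc, h20, add_zero]
      · rw [add_zero, add_zero]
    | cons ha p ih =>
      intro K
      obtain ⟨K₁, hK₁⟩ := htoggle _ _ ha K
      obtain ⟨K₂, hK₂⟩ := ih K₁
      refine ⟨K₂, fun z => ?_⟩
      rw [hK₂ z, hK₁ z]
      split_ifs <;> first | ring1 | linear_combination h20
  have hform1 : ∀ a c : ZMod 2, a ≠ c → a + 1 + 0 = c := by decide
  have hform2 : ∀ a c : ZMod 2, a ≠ c → a + 0 + 1 = c := by decide
  have hsum0 : ∀ K : E → Bool,
      ∑ z : X, ((againstCount K (w z) : ZMod 2) + t z) = 0 := by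
    intro K
    rw [Finset.sum_add_distrib, hφsum K, hsum]
    exact h2 _
  have main : ∀ m : ℕ, ∀ K : E → Bool,
      (Finset.univ.filter fun z => (againstCount K (w z) : ZMod 2) ≠ t z).card = m →
      ∃ K', ∀ x, (againstCount K' (w x) : ZMod 2) = t x := by
    intro m
    induction m using Nat.strong_induction_on with
    | _ m ih =>
      intro K hm
      rcases Finset.eq_empty_or_nonempty
        (Finset.univ.filter fun z => (againstCount K (w z) : ZMod 2) ≠ t z) with hemp | hne
      · refine ⟨K, fun z => ?_⟩
        by_contra hz
        have : z ∈ Finset.univ.filter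
            fun z => (againstCount K (w z) : ZMod 2) ≠ t z := by
          simp [hz]
        rw [hemp] at this
        simp at this
      · obtain ⟨x, hx⟩ := hne
        have hxne : (againstCount K (w x) : ZMod 2) ≠ t x := (Finset.mem_filter.mp hx).2
        have hy' : ∃ y ∈ Finset.univ.filter
            (fun z => (againstCount K (w z) : ZMod 2) ≠ t z), y ≠ x := by
          by_contra hno
          push_neg at hno
          have hfeq : (Finset.univ.filter
              fun z => (againstCount K (w z) : ZMod 2) ≠ t z) = {x} :=
            Finset.eq_singleton_iff_unique_mem.mpr ⟨hx, fun z hz => hno z hz⟩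
          have hS := hsum0 K
          rw [← Finset.sum_filter_add_sum_filter_not Finset.univ
            (fun z => (againstCount K (w z) : ZMod 2) ≠ t z)] at hS
          have hz2 : ∑ z ∈ Finset.univ.filter
              (fun z => ¬((againstCount K (w z) : ZMod 2) ≠ t z)),
              ((againstCount K (w z) : ZMod 2) + t z) = 0 := by
            refine Finset.sum_eq_zero fun z hz => ?_
            have hzz := (Finset.mem_filter.mp hz).2
            push_neg at hzz
            rw [hzz]
            exact h2 _
          rw [hz2, add_zero, hfeq, Finset.sum_singleton] at hS
          exact hxne ((by decide : ∀ a b : ZMod 2, a + b = 0 → a = b) _ _ hS)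
        obtain ⟨y, hy, hyx⟩ := hy'
        have hyne : (againstCount K (w y) : ZMod 2) ≠ t y := (Finset.mem_filter.mp hy).2
        obtain ⟨K', hK'⟩ := hreach x y (hGconn.preconnected x y) K
        have hKx : (againstCount K' (w x) : ZMod 2) = t x := by
          have hh := hK' x
          rw [if_pos rfl, if_neg (fun h : x = y => hyx h.symm)] at hh
          exact hh.trans (hform1 _ _ hxne)
        have hKy : (againstCount K' (w y) : ZMod 2) = t y := by
          have hh := hK' y
          rw [if_pos rfl, if_neg hyx] at hh
          exact hh.trans (hform2 _ _ hyne)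
        have hKz : ∀ z, z ≠ x → z ≠ y →
            (againstCount K' (w z) : ZMod 2) = (againstCount K (w z) : ZMod 2) := by
          intro z h1 h2'
          have hh := hK' z
          rwa [if_neg h1, if_neg h2', add_zero, add_zero] at hh
        have hsub : (Finset.univ.filter fun z => (againstCount K' (w z) : ZMod 2) ≠ t z)
            ⊆ (Finset.univ.filter
              fun z => (againstCount K (w z) : ZMod 2) ≠ t z).erase x := by
          intro z hz
          have hz' := (Finset.mem_filter.mp hz).2
          have hzx : z ≠ x := by rintro rfl; exact hz' hKx
          have hzy : z ≠ y := by rintro rfl; exact hz' hKy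
          refine Finset.mem_erase.mpr ⟨hzx, Finset.mem_filter.mpr ⟨Finset.mem_univ _, ?_⟩⟩
          rw [← hKz z hzx hzy]
          exact hz'
        have hmpos : 0 < m := hm ▸ Finset.card_pos.mpr ⟨x, hx⟩
        have hlt : (Finset.univ.filter
            fun z => (againstCount K' (w z) : ZMod 2) ≠ t z).card < m := by
          have h1 := Finset.card_le_card hsub
          have h2' := Finset.card_erase_le (s := Finset.univ.filter
            fun z => (againstCount K (w z) : ZMod 2) ≠ t z) (a := x)
          have h3 := Finset.card_erase_of_mem hx
          omega
        exact ih _ hlt K' rfl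
  exact main _ (fun _ => true) rfl

lemma zmod2_natCast_eq_iff (a b : ℕ) : ((a : ZMod 2) = (b : ZMod 2)) ↔ a % 2 = b % 2 :=
  (ZMod.natCast_eq_natCast_iff a b 2).trans ⟨fun h => h, fun h => h⟩

/-- Existence criterion for Kasteleyn orientations with prescribed boundary behaviour,
on a connected compact oriented surface of genus `g` with `μ` boundary components.
The surface is encoded by the counter-clockwise face boundary walks `bd f` and the
boundary component walks `C i` (oriented as the induced boundary), every edge of
`Γ̄ = Γ ∪ ∂Σ` occurring exactly twice, once in each direction, among the walks
`bd f` and `−C i`; connectedness is encoded by connectivity of the graph whose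
vertices are the faces and boundary components, adjacent when sharing an edge.
Given `n₁, …, n_μ ∈ {0,1}`, there is a Kasteleyn orientation `K`
(i.e. `n^K(∂f)` odd for every face `f`) with `1 + n^K(−C_i) ≡ n_i (mod 2)` for all
`i` if and only if `n₁ + ⋯ + n_μ ≡ V (mod 2)`. -/
theorem kasteleyn_boundary_existence
    {V E F : Type*} [Fintype V] [Fintype E] [Fintype F] [DecidableEq E]
    (src dst : E → V) (bd : F → List (E × Bool))
    (μ : ℕ) (C : Fin μ → List (E × Bool))
    (hfclosed : ∀ f : F, IsClosedWalk src dst (bd f))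
    (hcclosed : ∀ i : Fin μ, IsClosedWalk src dst (C i))
    (hpair : ∀ e : E,
      ((∑ f : F, (bd f).count (e, true)) + ∑ i : Fin μ, (revWalk (C i)).count (e, true)) = 1 ∧
      ((∑ f : F, (bd f).count (e, false)) + ∑ i : Fin μ, (revWalk (C i)).count (e, false)) = 1)
    (hconn : (SimpleGraph.fromRel (fun x y : F ⊕ Fin μ =>
      ∃ e : E, ∃ b b' : Bool,
        (e, b) ∈ (Sum.elim bd C x) ∧ (e, b') ∈ (Sum.elim bd C y))).Connected)
    (g : ℕ)
    (heuler : (Fintype.card V : ℤ) - Fintype.card E + Fintype.card F = 2 - 2 * g - μ)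
    (n : Fin μ → ℕ) (hn : ∀ i, n i ≤ 1) :
    (∃ K : E → Bool, (∀ f : F, Odd (againstCount K (bd f))) ∧
        ∀ i : Fin μ, (1 + againstCount K (revWalk (C i))) % 2 = n i) ↔
      (∑ i : Fin μ, n i) % 2 = Fintype.card V % 2 := by
  classical
  set w : F ⊕ Fin μ → List (E × Bool) := Sum.elim bd (fun i => revWalk (C i)) with hw
  set t : F ⊕ Fin μ → ZMod 2 :=
    Sum.elim (fun _ => (1 : ZMod 2)) (fun i => (n i : ZMod 2) + 1) with ht
  have hcount : ∀ (e : E) (b : Bool), ∑ x : F ⊕ Fin μ, (w x).count (e, b) = 1 := by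
    intro e b
    rw [Fintype.sum_sum_type]
    simp only [hw, Sum.elim_inl, Sum.elim_inr]
    cases b
    · exact (hpair e).2
    · exact (hpair e).1
  have h20 : (1 + 1 : ZMod 2) = 0 := by decide
  have hE2 : (Fintype.card E : ZMod 2)
      = (Fintype.card V : ZMod 2) + Fintype.card F + μ := by
    have h := congrArg (fun z : ℤ => (z : ZMod 2)) heuler
    push_cast at h
    linear_combination (-1 : ZMod 2) * h + ((g : ZMod 2) - 1) * h20
  have hsumt : ∑ x : F ⊕ Fin μ, t x
      = (Fintype.card F : ZMod 2) + μ + ((∑ i : Fin μ, n i : ℕ) : ZMod 2) := by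
    rw [Fintype.sum_sum_type]
    simp only [ht, Sum.elim_inl, Sum.elim_inr]
    rw [Finset.sum_const, Finset.sum_add_distrib, Finset.sum_const]
    simp [Fintype.card_fin, mul_comm]
    push_cast
    ring
  -- characterization of the desired property in ZMod 2 terms
  have hchar : ∀ K : E → Bool,
      ((∀ f : F, Odd (againstCount K (bd f))) ∧
        ∀ i : Fin μ, (1 + againstCount K (revWalk (C i))) % 2 = n i)
      ↔ (∀ x, (againstCount K (w x) : ZMod 2) = t x) := by
    intro K
    constructor
    · rintro ⟨h1, h2⟩ x
      cases x with
      | inl f =>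
        simp only [hw, ht, Sum.elim_inl]
        rw [show (1 : ZMod 2) = ((1 : ℕ) : ZMod 2) by norm_num, zmod2_natCast_eq_iff]
        simpa using Nat.odd_iff.mp (h1 f)
      | inr i =>
        simp only [hw, ht, Sum.elim_inr]
        have hi := h2 i
        rcases Nat.le_one_iff_eq_zero_or_eq_one.mp (hn i) with h0 | h1'
        · rw [h0] at hi ⊢
          have : (againstCount K (revWalk (C i)) : ZMod 2) = ((1 : ℕ) : ZMod 2) := by
            rw [zmod2_natCast_eq_iff]; omega
          rw [this]; norm_num
        · rw [h1'] at hi ⊢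
          have : (againstCount K (revWalk (C i)) : ZMod 2) = ((0 : ℕ) : ZMod 2) := by
            rw [zmod2_natCast_eq_iff]; omega
          rw [this]; decide
    · intro h
      constructor
      · intro f
        have := h (Sum.inl f)
        simp only [hw, ht, Sum.elim_inl] at this
        rw [show (1 : ZMod 2) = ((1 : ℕ) : ZMod 2) by norm_num,
          zmod2_natCast_eq_iff] at this
        rw [Nat.odd_iff]; omega
      · intro i
        have hi := h (Sum.inr i)
        simp only [hw, ht, Sum.elim_inr] at hi
        rcases Nat.le_one_iff_eq_zero_or_eq_one.mp (hn i) with h0 | h1'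
        · rw [h0] at hi ⊢
          rw [show ((0 : ℕ) : ZMod 2) + 1 = ((1 : ℕ) : ZMod 2) by decide,
            zmod2_natCast_eq_iff] at hi
          omega
        · rw [h1'] at hi ⊢
          rw [show ((1 : ℕ) : ZMod 2) + 1 = ((0 : ℕ) : ZMod 2) by decide,
            zmod2_natCast_eq_iff] at hi
          omega
  constructor
  · rintro ⟨K, hK⟩
    have hφ := (hchar K).mp hK
    have hS : ∑ x : F ⊕ Fin μ, (againstCount K (w x) : ZMod 2) = ∑ x, t x :=
      Finset.sum_congr rfl fun x _ => hφ x
    rw [← Nat.cast_sum, sum_againstCount w hcount K, hsumt, hE2] at hS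
    rw [← zmod2_natCast_eq_iff]
    linear_combination -hS
  · intro hVn
    have hcast : ((∑ i : Fin μ, n i : ℕ) : ZMod 2) = (Fintype.card V : ZMod 2) :=
      (zmod2_natCast_eq_iff _ _).mpr hVn
    have hsum : ∑ x : F ⊕ Fin μ, t x = (Fintype.card E : ZMod 2) := by
      rw [hsumt, hcast, hE2]; ring
    have hadj : ∀ x y, (SimpleGraph.fromRel (fun x y : F ⊕ Fin μ =>
        ∃ e : E, ∃ b b' : Bool,
          (e, b) ∈ (Sum.elim bd C x) ∧ (e, b') ∈ (Sum.elim bd C y))).Adj x y →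
        ∃ e b b', (e, b) ∈ w x ∧ (e, b') ∈ w y := by
      have hmem : ∀ (z : F ⊕ Fin μ) (e : E) (c : Bool),
          (e, c) ∈ Sum.elim bd C z → ∃ c', (e, c') ∈ w z := by
        intro z e c hc
        cases z with
        | inl f => exact ⟨c, by simpa [hw] using hc⟩
        | inr i =>
          refine ⟨!c, ?_⟩
          simp only [hw, Sum.elim_inr]
          rw [mem_revWalk, Bool.not_not]
          simpa using hc
      intro x y hxy
      obtain ⟨-, hrel | hrel⟩ := hxy
      · obtain ⟨e, b, b', hbx, hby⟩ := hrel
        obtain ⟨c, hc⟩ := hmem x e b hbx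
        obtain ⟨c', hc'⟩ := hmem y e b' hby
        exact ⟨e, c, c', hc, hc'⟩
      · obtain ⟨e, b, b', hby, hbx⟩ := hrel
        obtain ⟨c, hc⟩ := hmem x e b' hbx
        obtain ⟨c', hc'⟩ := hmem y e b hby
        exact ⟨e, c, c', hc, hc'⟩
    obtain ⟨K, hK⟩ := exists_orientation w hcount _ hadj hconn t hsum
    exact ⟨K, (hchar K).mpr hK⟩
end
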